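/- arXiv:1602.05337 — 7 statements merged into one kernel-verified Lean document; each statement's English description precedes it below -/
import Mathlib

section
/- The sequence (β_n), where β_n is the largest positive real root of x^n = x^{n-2} + ... + x + 1, is strictly increasing in n. -/
/-- The sequence `(β_n)` of largest positive real roots of
`x^n = x^{n-2} + ⋯ + x + 1` is strictly increasing in `n`. -/
theorem stmt1 (m n : ℕ) (hm : 3 ≤ m) (hmn : m < n)
    (βm βn : ℝ)
    (hβm : 0 < βm ∧ βm ^ m = ∑ i ∈ Finset.range (m - 1), βm ^ i ∧
      ∀ x : ℝ, 0 < x → x ^ m = ∑ i ∈ Finset.range (m - 1), x ^ i → x ≤ βm)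
    (hβn : 0 < βn ∧ βn ^ n = ∑ i ∈ Finset.range (n - 1), βn ^ i ∧
      ∀ x : ℝ, 0 < x → x ^ n = ∑ i ∈ Finset.range (n - 1), x ^ i → x ≤ βn) :
    βm < βn := by
  obtain ⟨hβm0, hβmeq, hβmmax⟩ := hβm
  obtain ⟨hβn0, hβneq, hβnmax⟩ := hβn
  -- βm > 1
  have h1 : 1 < βm := by
    by_contra h
    push_neg at h
    have hpow : βm ^ m ≤ 1 := pow_le_one₀ hβm0.le h
    have hsum : 1 + βm ≤ ∑ i ∈ Finset.range (m - 1), βm ^ i := by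
      have hsub : ∑ i ∈ Finset.range 2, βm ^ i ≤ ∑ i ∈ Finset.range (m - 1), βm ^ i :=
        Finset.sum_le_sum_of_subset_of_nonneg (Finset.range_subset_range.2 (by omega))
          (fun i _ _ => pow_nonneg hβm0.le i)
      simpa [Finset.sum_range_succ] using hsub
    linarith
  -- βm < 2
  have h2 : βm < 2 := by
    by_contra h
    push_neg at h
    have hnn : 0 ≤ ∑ i ∈ Finset.range (m - 1), βm ^ i :=
      Finset.sum_nonneg fun i _ => pow_nonneg hβm0.le i
    have hge : (∑ i ∈ Finset.range (m - 1), βm ^ i) ≤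
        (∑ i ∈ Finset.range (m - 1), βm ^ i) * (βm - 1) :=
      le_mul_of_one_le_right hnn (by linarith)
    rw [geom_sum_mul] at hge
    have hlt : βm ^ (m - 1) < βm ^ m := pow_lt_pow_right₀ h1 (by omega)
    linarith
  -- f_n(βm) < 0
  set k := n - m with hk
  have key : ∑ i ∈ Finset.range (n - 1), βm ^ i =
      (∑ i ∈ Finset.range k, βm ^ i) + βm ^ n := by
    have hn1 : n - 1 = k + (m - 1) := by omega
    rw [hn1, Finset.sum_range_add]
    congr 1
    have hmul : ∑ i ∈ Finset.range (m - 1), βm ^ (k + i) =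
        βm ^ k * ∑ i ∈ Finset.range (m - 1), βm ^ i := by
      rw [Finset.mul_sum]
      exact Finset.sum_congr rfl fun i _ => by rw [pow_add]
    rw [hmul, ← hβmeq, ← pow_add]
    congr 1
    omega
  have hsumk : 0 < ∑ i ∈ Finset.range k, βm ^ i :=
    Finset.sum_pos (fun i _ => pow_pos hβm0 i) ⟨0, Finset.mem_range.2 (by omega)⟩
  have hfneg : βm ^ n - ∑ i ∈ Finset.range (n - 1), βm ^ i < 0 := by
    rw [key]; linarith
  -- f_n(2) > 0
  have hf2 : (0 : ℝ) < 2 ^ n - ∑ i ∈ Finset.range (n - 1), (2 : ℝ) ^ i := by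
    have hs : ∑ i ∈ Finset.range (n - 1), (2 : ℝ) ^ i = 2 ^ (n - 1) - 1 := by
      have h := geom_sum_mul (2 : ℝ) (n - 1)
      norm_num at h
      linarith
    rw [hs]
    have hle : (2 : ℝ) ^ (n - 1) ≤ 2 ^ n := pow_le_pow_right₀ one_le_two (by omega)
    linarith
  -- IVT
  set f : ℝ → ℝ := fun x => x ^ n - ∑ i ∈ Finset.range (n - 1), x ^ i with hf
  have hcont : ContinuousOn f (Set.Icc βm 2) :=
    ((continuous_pow n).sub (continuous_finset_sum _ fun i _ => continuous_pow i)).continuousOn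
  have h0mem : (0 : ℝ) ∈ Set.Icc (f βm) (f 2) := ⟨hfneg.le, hf2.le⟩
  obtain ⟨c, hcmem, hfc⟩ := intermediate_value_Icc h2.le hcont h0mem
  have hc0 : 0 < c := lt_of_lt_of_le hβm0 hcmem.1
  have hceq : c ^ n = ∑ i ∈ Finset.range (n - 1), c ^ i := by
    have : c ^ n - ∑ i ∈ Finset.range (n - 1), c ^ i = 0 := hfc
    linarith
  have hle : c ≤ βn := hβnmax c hc0 hceq
  have hne : βm ≠ c := by
    intro h
    rw [← h] at hfc
    exact absurd hfc (ne_of_lt hfneg)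
  exact lt_of_lt_of_le (lt_of_le_of_ne hcmem.1 hne) hle
end

section
/- The sequence (β_n) of largest positive real roots of x^n = x^{n-2} + ... + x + 1 converges to the golden ratio (1+√5)/2 as n → ∞. -/
lemma key_id (x : ℝ) (m : ℕ) :
    (x - 1) * (x ^ (m + 1) - ∑ i ∈ Finset.range m, x ^ i)
      = x ^ m * (x ^ 2 - x - 1) + 1 := by
  have h := geom_sum_mul x m
  linear_combination -h

/-- The sequence `(β_n)` of largest positive real roots of `x^n = x^{n-2} + ⋯ + x + 1`
converges to the golden ratio `(1 + √5)/2` as `n → ∞`. -/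
theorem stmt2 (β : ℕ → ℝ)
    (hβ : ∀ n, 3 ≤ n → 0 < β n ∧ (β n) ^ n = ∑ i ∈ Finset.range (n - 1), (β n) ^ i ∧
      ∀ x : ℝ, 0 < x → x ^ n = ∑ i ∈ Finset.range (n - 1), x ^ i → x ≤ β n) :
    Filter.Tendsto β Filter.atTop (nhds ((1 + Real.sqrt 5) / 2)) := by
  set φ : ℝ := (1 + Real.sqrt 5) / 2 with hφdef
  have hs : Real.sqrt 5 ^ 2 = 5 := Real.sq_sqrt (by norm_num)
  have hs2 : 2 < Real.sqrt 5 := by nlinarith [Real.sqrt_nonneg 5]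
  have hφroot : φ ^ 2 - φ - 1 = 0 := by rw [hφdef]; nlinarith
  have hφgt : (3 : ℝ) / 2 < φ := by rw [hφdef]; nlinarith
  -- Upper bound: β n < φ for all n ≥ 3.
  have hupper : ∀ n, 3 ≤ n → β n < φ := by
    intro n hn
    obtain ⟨m, rfl⟩ : ∃ m, n = m + 1 := ⟨n - 1, by omega⟩
    obtain ⟨hpos, heq, -⟩ := hβ (m + 1) hn
    simp only [Nat.add_sub_cancel] at heq
    have hk := key_id (β (m + 1)) m
    rw [heq, sub_self, mul_zero] at hk
    have hpm : 0 < β (m + 1) ^ m := pow_pos hpos m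
    have hneg : (β (m + 1)) ^ 2 - β (m + 1) - 1 < 0 := by
      by_contra h
      push_neg at h
      nlinarith
    nlinarith
  rw [Metric.tendsto_atTop]
  intro ε hε
  set a : ℝ := max (φ - ε / 2) (3 / 2) with hadef
  have ha1 : (1 : ℝ) < a := lt_of_lt_of_le (by norm_num) (le_max_right _ _)
  have haφ : a < φ := max_lt (by linarith) hφgt
  have hapos : 0 < a := by linarith
  have hd : a ^ 2 - a - 1 < 0 := by nlinarith
  obtain ⟨N, hN⟩ := Filter.eventually_atTop.mp
    ((tendsto_pow_atTop_atTop_of_one_lt ha1).eventually_gt_atTop (1 / (1 + a - a ^ 2)))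
  refine ⟨max N 3 + 1, fun n hn => ?_⟩
  obtain ⟨m, rfl⟩ : ∃ m, n = m + 1 := ⟨n - 1, by omega⟩
  have hm : N ≤ m := by omega
  have hn3 : 3 ≤ m + 1 := by omega
  have ham : 1 / (1 + a - a ^ 2) < a ^ m := hN m hm
  -- f a < 0 and f φ > 0, IVT gives a root in [a, φ]
  set f : ℝ → ℝ := fun x => x ^ (m + 1) - ∑ i ∈ Finset.range m, x ^ i with hfdef
  have hfa : f a < 0 := by
    show a ^ (m + 1) - ∑ i ∈ Finset.range m, a ^ i < 0
    have hk := key_id a m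
    have h1 : 0 < 1 + a - a ^ 2 := by linarith
    have : a ^ m * (a ^ 2 - a - 1) + 1 < 0 := by
      have := (div_lt_iff₀ h1).mp ham
      nlinarith
    nlinarith [hk]
  have hfφ : 0 < f φ := by
    have hk := key_id φ m
    rw [hφroot, mul_zero, zero_add] at hk
    show 0 < φ ^ (m + 1) - ∑ i ∈ Finset.range m, φ ^ i
    nlinarith [hk]
  have hcont : Continuous f := by
    apply Continuous.sub (continuous_pow _)
    exact continuous_finset_sum _ fun i _ => continuous_pow _
  have hsub := intermediate_value_Icc (le_of_lt haφ) hcont.continuousOn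
  have h0 : (0 : ℝ) ∈ Set.Icc (f a) (f φ) := ⟨le_of_lt hfa, le_of_lt hfφ⟩
  obtain ⟨c, hc, hfc⟩ := hsub h0
  have hcpos : 0 < c := lt_of_lt_of_le hapos hc.1
  obtain ⟨hpos, heq, hmax⟩ := hβ (m + 1) hn3
  have hle : c ≤ β (m + 1) := by
    apply hmax c hcpos
    simp only [Nat.add_sub_cancel]
    have : c ^ (m + 1) - ∑ i ∈ Finset.range m, c ^ i = 0 := hfc
    linarith
  have hub := hupper (m + 1) hn3
  rw [Real.dist_eq, abs_lt]
  constructor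
  · have : φ - ε / 2 ≤ a := le_max_left _ _
    linarith [hc.1]
  · linarith
end

section
/- Let n ≥ 3 and β be the largest positive root of x^n = x^{n-2} + ... + x + 1, with a = 1/(β²−1), T_0(x) = βx, T_1(x) = βx − 1, and b = β/(β²−1). Then T_0^{n-1}(T_1(a)) = a and T_1^{n-1}(T_0(b)) = b. -/
lemma iter0_aux (β : ℝ) : ∀ k (x : ℝ), (fun x : ℝ => β * x)^[k] x = β ^ k * x := by
  intro k
  induction k with
  | zero => intro x; simp
  | succ k ih =>
    intro x
    rw [Function.iterate_succ_apply', ih]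
    ring

lemma iter1_aux (β : ℝ) : ∀ k (x : ℝ),
    (fun x : ℝ => β * x - 1)^[k] x = β ^ k * x - ∑ i ∈ Finset.range k, β ^ i := by
  intro k
  induction k with
  | zero => intro x; simp
  | succ k ih =>
    intro x
    rw [Function.iterate_succ_apply', ih, geom_sum_succ]
    ring

/-- Let `β` be the largest positive root of `x^n = x^{n-2} + ⋯ + x + 1` (`n ≥ 3`),
`a = 1/(β²-1)`, `b = β/(β²-1)`. Then `T₀^{n-1}(T₁ a) = a` and `T₁^{n-1}(T₀ b) = b`,
where `T₀ x = βx`, `T₁ x = βx - 1`. -/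
theorem stmt6 (n : ℕ) (hn : 3 ≤ n) (β : ℝ)
    (hβ : 0 < β ∧ β ^ n = ∑ i ∈ Finset.range (n - 1), β ^ i ∧
      ∀ x : ℝ, 0 < x → x ^ n = ∑ i ∈ Finset.range (n - 1), x ^ i → x ≤ β)
    (a b : ℝ) (ha : a = (β ^ 2 - 1)⁻¹) (hb : b = β * (β ^ 2 - 1)⁻¹) :
    (fun x : ℝ => β * x)^[n - 1] (β * a - 1) = a ∧
    (fun x : ℝ => β * x - 1)^[n - 1] (β * b) = b := by
  obtain ⟨hβ0, heq, -⟩ := hβ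
  -- β > 1
  have hβ1 : 1 < β := by
    by_contra h
    push_neg at h
    have h1 : β ^ n ≤ 1 := pow_le_one₀ hβ0.le h
    have h2 : ∑ i ∈ Finset.range 2, β ^ i ≤ ∑ i ∈ Finset.range (n - 1), β ^ i := by
      apply Finset.sum_le_sum_of_subset_of_nonneg
      · exact Finset.range_subset_range.mpr (by omega)
      · intro i _ _; positivity
    simp [Finset.sum_range_succ] at h2
    nlinarith
  set m := n - 1 with hm
  have hnm : n = m + 1 := by omega
  rw [hnm] at heq
  -- key identity: β^(m+2) = β^(m+1) + β^m - 1
  have hgeom : ∑ i ∈ Finset.range m, β ^ i = (β ^ m - 1) / (β - 1) :=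
    geom_sum_eq (ne_of_gt hβ1) m
  have hne : β - 1 ≠ 0 := by linarith
  have key : β ^ (m + 2) = β ^ (m + 1) + β ^ m - 1 := by
    rw [hgeom] at heq
    field_simp at heq
    ring_nf at heq ⊢
    nlinarith [heq]
  have hsq : β ^ 2 - 1 ≠ 0 := by nlinarith
  have key' : β ^ m * β ^ 2 = β ^ m * β + β ^ m - 1 := by
    have e1 : β ^ (m + 2) = β ^ m * β ^ 2 := by ring
    have e2 : β ^ (m + 1) = β ^ m * β := by ring
    rw [e1, e2] at key
    linarith
  constructor
  · rw [iter0_aux, ha]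
    field_simp
    linear_combination -key'
  · rw [iter1_aux, hb, hgeom]
    field_simp
    linear_combination (β - 1) * key'
end

section
/- With a_n = det(λE − S_n) (characteristic polynomial of the adjacency matrix S_n), the recursion a_{n+1} = λ² a_n − 2λ^n holds for n ≥ 3, with a_3 = λ²(λ³ − 2λ − 2); consequently a_n = λ^{n-1}(λ^n − 2(1 + λ + λ² + ... + λ^{n-2})). -/
/-- The `(2n-1)×(2n-1)` adjacency matrix of the Markov partition for the shrinking
random β-transformation: row `k` (`0 ≤ k ≤ n-2`) has a `1` in column `k+1` only,
row `n-1` has `1`'s in all columns except column `n-1`, and row `n-1+i`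
(`1 ≤ i ≤ n-1`) has a `1` in column `n-2+i` only. -/
def adjMat (n : ℕ) : Matrix (Fin (2 * n - 1)) (Fin (2 * n - 1)) ℝ := fun r c =>
  if r.val < n - 1 then (if c.val = r.val + 1 then 1 else 0)
  else if r.val = n - 1 then (if c.val = n - 1 then 0 else 1)
  else (if c.val = r.val - 1 then 1 else 0)

def dEnt (p : ℕ) (l : ℝ) (i j : ℕ) : ℝ :=
  if i < p then (if j = i then l else if j = i + 1 then -1 else 0)
  else if i = p then (if j = p then l else -1)
  else if j = i then l else if j + 1 = i then -1 else 0

def eEnt (l : ℝ) (i j : ℕ) : ℝ :=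
  if i = 0 then -1 else if j = i then l else if j + 1 = i then -1 else 0

lemma succAbove_val {N : ℕ} (i : Fin (N + 1)) (j : Fin N) :
    (i.succAbove j).val = if j.val < i.val then j.val else j.val + 1 := by
  by_cases h' : j.val < i.val
  · rw [if_pos h', Fin.succAbove_of_castSucc_lt _ _ (by simpa [Fin.lt_def] using h')]
    simp
  · rw [if_neg h', Fin.succAbove_of_le_castSucc _ _ (by simp [Fin.le_def]; omega)]
    simp

lemma det_lowTri {N : ℕ} (M : Matrix (Fin N) (Fin N) ℝ)
    (h : ∀ i j : Fin N, i < j → M i j = 0) : M.det = ∏ i, M i i := by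
  apply Matrix.det_of_lowerTriangular
  intro i j hij
  exact h i j (by simpa using hij)

lemma detE (l : ℝ) : ∀ q (M : Matrix (Fin (q + 1)) (Fin (q + 1)) ℝ),
    (∀ i j, M i j = eEnt l i.val j.val) →
    M.det = -(∑ t ∈ Finset.range (q + 1), l ^ t) := by
  intro q
  induction q with
  | zero =>
    intro M hM
    rw [Matrix.det_fin_one, hM]
    simp [eEnt]
  | succ q ih =>
    intro M hM
    rw [Matrix.det_succ_column_zero]
    rw [Finset.sum_eq_add_of_mem (0 : Fin (q + 2)) 1 (Finset.mem_univ _)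
      (Finset.mem_univ _) (by simp [Fin.ext_iff]) ?_]
    · have hA : (M.submatrix (Fin.succAbove 0) Fin.succ).det = l ^ (q + 1) := by
        rw [det_lowTri]
        · have hd : ∀ i : Fin (q + 1), (M.submatrix (Fin.succAbove 0) Fin.succ) i i = l := by
            intro i
            simp only [Matrix.submatrix_apply, Fin.succAbove_zero, hM, Fin.val_succ]
            unfold eEnt
            split_ifs <;> first | rfl | omega | contradiction
          rw [Finset.prod_congr rfl (fun i _ => hd i)]
          simp
        · intro i j hij
          have hij' : i.val < j.val := hij
          simp only [Matrix.submatrix_apply, Fin.succAbove_zero, hM, Fin.val_succ]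
          unfold eEnt
          split_ifs <;> first | rfl | omega | contradiction
      have hB : (M.submatrix (Fin.succAbove 1) Fin.succ).det
          = -(∑ t ∈ Finset.range (q + 1), l ^ t) := by
        apply ih
        intro i j
        simp only [Matrix.submatrix_apply, hM, Fin.val_succ, succAbove_val, Fin.val_one]
        unfold eEnt
        by_cases hi1 : (i : ℕ) < 1 <;> simp only [hi1, if_true, if_false] <;> split_ifs <;> first | rfl | omega | contradiction
      have hM0 : M 0 0 = -1 := by
        rw [hM]; unfold eEnt; simp
      have hM1 : M 1 0 = -1 := by
        rw [hM]
        unfold eEnt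
        rw [Fin.val_one, Fin.val_zero]
        norm_num
      rw [hA, hB, hM0, hM1]
      simp only [Fin.val_zero, Fin.val_one, pow_zero, pow_one]
      rw [Finset.sum_range_succ (fun t => l ^ t) (q + 1)]
      ring
    · intro c _ hc
      have h1 : c.val ≠ 0 := fun h => hc.1 (Fin.ext h)
      have h2 : c.val ≠ 1 := fun h => hc.2 (Fin.ext h)
      have h0 : M c 0 = 0 := by
        rw [hM]
        unfold eEnt
        rw [Fin.val_zero]
        rw [if_neg h1, if_neg (by omega), if_neg (by omega)]
      rw [h0]; ring

lemma detD (l : ℝ) : ∀ p q m, m = p + q + 1 → ∀ M : Matrix (Fin m) (Fin m) ℝ,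
    (∀ i j, M i j = dEnt p l i.val j.val) →
    M.det = l ^ m - l ^ p * (∑ t ∈ Finset.range q, l ^ t)
             - l ^ q * (∑ t ∈ Finset.range p, l ^ t) := by
  intro p
  induction p with
  | zero =>
    intro q m hm M hM
    have hm' : m = q + 1 := by omega
    subst hm'
    cases q with
    | zero =>
      rw [Matrix.det_fin_one, hM]
      unfold dEnt
      norm_num
    | succ q =>
      rw [Matrix.det_succ_column_zero]
      rw [Finset.sum_eq_add_of_mem (0 : Fin (q + 2)) 1 (Finset.mem_univ _)
        (Finset.mem_univ _) (by simp [Fin.ext_iff]) ?_]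
      · have hA : (M.submatrix (Fin.succAbove 0) Fin.succ).det = l ^ (q + 1) := by
          rw [det_lowTri]
          · have hd : ∀ i : Fin (q + 1), (M.submatrix (Fin.succAbove 0) Fin.succ) i i = l := by
              intro i
              simp only [Matrix.submatrix_apply, Fin.succAbove_zero, hM, Fin.val_succ]
              unfold dEnt
              split_ifs <;> first | rfl | omega | contradiction
            rw [Finset.prod_congr rfl (fun i _ => hd i)]
            simp
          · intro i j hij
            have hij' : i.val < j.val := hij
            simp only [Matrix.submatrix_apply, Fin.succAbove_zero, hM, Fin.val_succ]
            unfold dEnt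
            split_ifs <;> first | rfl | omega | contradiction
        have hB : (M.submatrix (Fin.succAbove 1) Fin.succ).det
            = -(∑ t ∈ Finset.range (q + 1), l ^ t) := by
          apply detE
          intro i j
          simp only [Matrix.submatrix_apply, hM, Fin.val_succ, succAbove_val, Fin.val_one]
          unfold dEnt eEnt
          by_cases hi1 : (i : ℕ) < 1 <;> simp only [hi1, if_true, if_false] <;> split_ifs <;> first | rfl | omega | contradiction
        have hM0 : M 0 0 = l := by
          rw [hM]; unfold dEnt; simp
        have hM1 : M 1 0 = -1 := by
          rw [hM]
          unfold dEnt
          rw [Fin.val_one, Fin.val_zero]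
          norm_num
        rw [hA, hB, hM0, hM1]
        simp only [Fin.val_zero, Fin.val_one, pow_zero, pow_one]
        norm_num
        ring
      · intro c _ hc
        have h1 : c.val ≠ 0 := fun h => hc.1 (Fin.ext h)
        have h2 : c.val ≠ 1 := fun h => hc.2 (Fin.ext h)
        have h0 : M c 0 = 0 := by
          rw [hM]
          unfold dEnt
          rw [Fin.val_zero]
          split_ifs <;> first | rfl | omega | contradiction
        rw [h0]; ring
  | succ p ih =>
    intro q m hm M hM
    have hm' : m = (p + q + 1) + 1 := by omega
    subst hm'
    rw [Matrix.det_succ_column_zero]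
    have hplt : p + 1 < p + q + 1 + 1 := by omega
    set mid : Fin (p + q + 1 + 1) := ⟨p + 1, hplt⟩ with hmid
    have hmidv : mid.val = p + 1 := rfl
    rw [Finset.sum_eq_add_of_mem (0 : Fin (p + q + 1 + 1)) mid (Finset.mem_univ _)
      (Finset.mem_univ _) (by intro h; have := congrArg Fin.val h; rw [hmidv] at this; simp at this) ?_]
    · have hA : (M.submatrix (Fin.succAbove 0) Fin.succ).det
          = l ^ (p + q + 1) - l ^ p * (∑ t ∈ Finset.range q, l ^ t)
             - l ^ q * (∑ t ∈ Finset.range p, l ^ t) := by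
        apply ih q (p + q + 1) rfl
        intro i j
        simp only [Matrix.submatrix_apply, Fin.succAbove_zero, hM, Fin.val_succ]
        unfold dEnt
        split_ifs <;> first | rfl | omega | contradiction
      have hC : (M.submatrix (Fin.succAbove mid) Fin.succ).det
          = (-1) ^ (p + 1) * l ^ q := by
        rw [det_lowTri]
        · have hd : ∀ i : Fin (p + q + 1),
              (M.submatrix (Fin.succAbove mid) Fin.succ) i i
                = if (i : ℕ) < p + 1 then (-1 : ℝ) else l := by
            intro i
            simp only [Matrix.submatrix_apply, hM, Fin.val_succ, succAbove_val, hmidv]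
            unfold dEnt
            split_ifs <;> first | rfl | omega | contradiction
          rw [Finset.prod_congr rfl (fun i _ => hd i)]
          rw [Fin.prod_univ_eq_prod_range (fun i => if i < p + 1 then (-1 : ℝ) else l)]
          rw [show p + q + 1 = (p + 1) + q by omega]
          rw [Finset.prod_range_add]
          congr 1
          · rw [Finset.prod_congr rfl (fun i hi => if_pos (Finset.mem_range.mp hi))]
            simp
          · rw [Finset.prod_congr rfl (fun i _ => if_neg (by omega))]
            simp
        · intro i j hij
          have hij' : i.val < j.val := hij
          simp only [Matrix.submatrix_apply, hM, Fin.val_succ, succAbove_val, hmidv]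
          unfold dEnt
          split_ifs <;> first | rfl | omega | contradiction
      have hM0 : M 0 0 = l := by
        rw [hM]; unfold dEnt; simp
      have hMm : M mid 0 = -1 := by
        rw [hM]
        unfold dEnt
        rw [Fin.val_zero, hmidv]
        split_ifs <;> first | rfl | omega | contradiction
      rw [hA, hC, hM0, hMm, hmidv]
      simp only [Fin.val_zero, pow_zero]
      have hs : (-1 : ℝ) ^ (p + 1) * (-1 : ℝ) ^ (p + 1) = 1 := by
        rw [← pow_add]
        exact Even.neg_one_pow ⟨p + 1, rfl⟩
      rw [geom_sum_succ]
      linear_combination (-(l ^ q)) * hs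
    · intro c _ hc
      have h1 : c.val ≠ 0 := fun h => hc.1 (Fin.ext h)
      have h2 : c.val ≠ p + 1 := fun h => hc.2 (Fin.ext (h.trans hmidv.symm))
      have h0 : M c 0 = 0 := by
        rw [hM]
        unfold dEnt
        rw [Fin.val_zero]
        split_ifs <;> first | rfl | omega | contradiction
      rw [h0]; ring

lemma detMain (l : ℝ) (n : ℕ) (hn : 1 ≤ n) :
    (l • (1 : Matrix (Fin (2 * n - 1)) (Fin (2 * n - 1)) ℝ) - adjMat n).det
      = l ^ (n - 1) * (l ^ n - 2 * ∑ t ∈ Finset.range (n - 1), l ^ t) := by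
  have h := detD l (n - 1) (n - 1) (2 * n - 1) (by omega)
      (l • (1 : Matrix (Fin (2 * n - 1)) (Fin (2 * n - 1)) ℝ) - adjMat n) ?_
  · rw [h]
    have e : 2 * n - 1 = (n - 1) + n := by omega
    rw [e, pow_add]
    ring
  · intro i j
    simp only [Matrix.sub_apply, Matrix.smul_apply, Matrix.one_apply, smul_eq_mul, Fin.ext_iff]
    unfold adjMat dEnt
    split_ifs <;> first | ring1 | omega | contradiction


/-- With `a_n = det(λI - S_n)`, the recursion `a_{n+1} = λ² a_n - 2 λ^n` holds for
`n ≥ 3`, with `a_3 = λ²(λ³ - 2λ - 2)`; consequently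
`a_n = λ^{n-1}(λ^n - 2(1 + λ + ⋯ + λ^{n-2}))`. -/
theorem stmt13 (l : ℝ) :
    (∀ n : ℕ, 3 ≤ n →
      (l • (1 : Matrix (Fin (2 * (n + 1) - 1)) (Fin (2 * (n + 1) - 1)) ℝ) - adjMat (n + 1)).det
        = l ^ 2 * (l • (1 : Matrix (Fin (2 * n - 1)) (Fin (2 * n - 1)) ℝ) - adjMat n).det
          - 2 * l ^ n) ∧
    (l • (1 : Matrix (Fin (2 * 3 - 1)) (Fin (2 * 3 - 1)) ℝ) - adjMat 3).det
      = l ^ 2 * (l ^ 3 - 2 * l - 2) ∧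
    (∀ n : ℕ, 3 ≤ n →
      (l • (1 : Matrix (Fin (2 * n - 1)) (Fin (2 * n - 1)) ℝ) - adjMat n).det
        = l ^ (n - 1) * (l ^ n - 2 * ∑ i ∈ Finset.range (n - 1), l ^ i)) := by
  refine ⟨?_, ?_, ?_⟩
  · intro n hn
    obtain ⟨k, rfl⟩ : ∃ k, n = k + 3 := ⟨n - 3, by omega⟩
    rw [detMain l (k + 3 + 1) (by omega), detMain l (k + 3) (by omega)]
    have e1 : k + 3 + 1 - 1 = k + 3 := by omega
    have e2 : k + 3 - 1 = k + 2 := by omega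
    rw [e1, e2, geom_sum_succ]
    ring1
  · rw [detMain l 3 (by norm_num)]
    have hsum : (∑ i ∈ Finset.range (3 - 1), l ^ i) = 1 + l := by
      rw [show (3 : ℕ) - 1 = 2 from rfl, Finset.sum_range_succ, Finset.sum_range_one]
      norm_num
    rw [hsum, show (3 : ℕ) - 1 = 2 from rfl]
    ring1
  · intro n hn
    exact detMain l n (by omega)
end

section
/- For n ≥ 3, the vector u with u_k = (1 + λ + ... + λ^k)/λ^k for 0 ≤ k ≤ n−2, u_{n-1} = λ, and u_{n-1+i} = u_{n-1-i} for 1 ≤ i ≤ n−1 is a left eigenvector of S_n with eigenvalue λ, where λ satisfies λ^n = 2(1 + λ + ... + λ^{n-2}). -/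
lemma key15 (l : ℝ) (hl : l ≠ 0) (m : ℕ) :
    (∑ i ∈ Finset.range (m+1), l^i)/l^m + l
      = l * ((∑ i ∈ Finset.range (m+1+1), l^i)/l^(m+1)) := by
  rw [Finset.sum_range_succ _ (m+1)]
  field_simp
  ring

section helpers
variable {n : ℕ} (r c : Fin (2 * n - 1))

lemma adjA (h1 : r.val < n - 1) (h2 : c.val = r.val + 1) : adjMat n r c = 1 := by
  unfold adjMat; rw [if_pos h1, if_pos h2]

lemma adjB (h1 : r.val = n - 1) (h2 : c.val ≠ n - 1) : adjMat n r c = 1 := by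
  unfold adjMat; rw [if_neg (by omega), if_pos h1, if_neg h2]

lemma adjC (h1 : n - 1 < r.val) (h2 : c.val = r.val - 1) : adjMat n r c = 1 := by
  unfold adjMat; rw [if_neg (by omega), if_neg (by omega), if_pos h2]

lemma adjZ (h1 : r.val < n - 1 → c.val ≠ r.val + 1)
    (h2 : r.val = n - 1 → c.val = n - 1)
    (h3 : n - 1 < r.val → c.val ≠ r.val - 1) : adjMat n r c = 0 := by
  unfold adjMat
  rcases lt_trichotomy r.val (n-1) with h | h | h
  · rw [if_pos h, if_neg (h1 h)]
  · rw [if_neg (by omega), if_pos h, if_pos (h2 h)]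
  · rw [if_neg (by omega), if_neg (by omega), if_neg (h3 h)]

end helpers

/-- For `n ≥ 3`, the vector `u` with `u_k = (1 + λ + ⋯ + λ^k)/λ^k` for `0 ≤ k ≤ n-2`,
`u_{n-1} = λ`, and `u_{n-1+i} = u_{n-1-i}`, is a left eigenvector of `S_n` with
eigenvalue `λ`, where `λ > 0` solves `λ^n = 2(1 + λ + ⋯ + λ^{n-2})`. -/
theorem stmt15 (n : ℕ) (hn : 3 ≤ n) (l : ℝ) (hlpos : 0 < l)
    (hl : l ^ n = 2 * ∑ i ∈ Finset.range (n - 1), l ^ i)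
    (u : Fin (2 * n - 1) → ℝ)
    (hu : ∀ k, u k = if k.val = n - 1 then l else
      (∑ i ∈ Finset.range (min k.val (2 * n - 2 - k.val) + 1), l ^ i)
        / l ^ (min k.val (2 * n - 2 - k.val))) :
    Matrix.vecMul u (adjMat n) = l • u := by
  have hl0 : l ≠ 0 := ne_of_gt hlpos
  have huval : ∀ (k : Fin (2*n-1)) (m : ℕ), k.val ≠ n - 1 →
      min k.val (2*n-2-k.val) = m →
      u k = (∑ i ∈ Finset.range (m+1), l^i)/l^m := by
    intro k m hk hm
    rw [hu k, if_neg hk, hm]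
  have hmid : ∀ (k : Fin (2*n-1)), k.val = n - 1 → u k = l := by
    intro k hk
    rw [hu k, if_pos hk]
  funext c
  have hc2 : c.val < 2*n-1 := c.isLt
  simp only [Matrix.vecMul, dotProduct, Pi.smul_apply, smul_eq_mul]
  have hrm : (n-1 : ℕ) < 2*n-1 := by omega
  rcases lt_trichotomy c.val (n-1) with hcase | hcase | hcase
  · rcases Nat.eq_zero_or_pos c.val with hc0 | hc0
    · -- c = 0 : only the middle row contributes
      rw [Finset.sum_eq_single_of_mem ⟨n-1, hrm⟩ (Finset.mem_univ _)
        (fun b _ hb => by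
          have hbv : b.val ≠ n-1 := fun h => hb (Fin.ext h)
          rw [adjZ b c (by intro h; omega) (by intro h; omega) (by intro h; omega),
            mul_zero])]
      rw [adjB _ c rfl (show c.val ≠ n-1 by omega), mul_one, hmid ⟨n-1, hrm⟩ rfl,
        huval c 0 (by omega) (by omega)]
      simp
    · -- 1 ≤ c < n-1 : rows c-1 and n-1
      have hr1 : c.val - 1 < 2*n-1 := by omega
      rw [Finset.sum_eq_add_of_mem ⟨c.val-1, hr1⟩ ⟨n-1, hrm⟩ (Finset.mem_univ _)
        (Finset.mem_univ _) (Fin.ne_of_val_ne (show c.val-1 ≠ n-1 by omega))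
        (fun b _ hb => by
          have hb1 : b.val ≠ c.val - 1 := fun h => hb.1 (Fin.ext h)
          have hb2 : b.val ≠ n-1 := fun h => hb.2 (Fin.ext h)
          rw [adjZ b c (by intro h; omega) (by intro h; omega) (by intro h; omega),
            mul_zero])]
      rw [adjA _ c (show c.val-1 < n-1 by omega) (show c.val = c.val-1+1 by omega),
        mul_one,
        adjB _ c rfl (show c.val ≠ n-1 by omega), mul_one, hmid ⟨n-1, hrm⟩ rfl,
        huval ⟨c.val-1, hr1⟩ (c.val-1) (show c.val-1 ≠ n-1 by omega)
          (show min (c.val-1) (2*n-2-(c.val-1)) = c.val-1 by omega),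
        huval c (c.val-1+1) (by omega) (by omega)]
      exact key15 l hl0 (c.val-1)
  · -- c = n-1 : rows n-2 and n
    have hra : (n-2 : ℕ) < 2*n-1 := by omega
    have hrb : (n : ℕ) < 2*n-1 := by omega
    rw [Finset.sum_eq_add_of_mem ⟨n-2, hra⟩ ⟨n, hrb⟩ (Finset.mem_univ _)
      (Finset.mem_univ _) (Fin.ne_of_val_ne (show n-2 ≠ n by omega))
      (fun b _ hb => by
        have hb1 : b.val ≠ n - 2 := fun h => hb.1 (Fin.ext h)
        have hb2 : b.val ≠ n := fun h => hb.2 (Fin.ext h)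
        rw [adjZ b c (by intro h; omega) (by intro h; omega) (by intro h; omega),
          mul_zero])]
    rw [adjA _ c (show n-2 < n-1 by omega) (show c.val = n-2+1 by omega), mul_one,
      adjC _ c (show n-1 < n by omega) (show c.val = n-1 from hcase), mul_one,
      huval ⟨n-2, hra⟩ (n-2) (show n-2 ≠ n-1 by omega)
        (show min (n-2) (2*n-2-(n-2)) = n-2 by omega),
      huval ⟨n, hrb⟩ (n-2) (show n ≠ n-1 by omega)
        (show min n (2*n-2-n) = n-2 by omega),
      hmid c hcase]
    have hsum : (∑ i ∈ Finset.range (n-2+1), l^i) = l^n / 2 := by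
      have h : n - 2 + 1 = n - 1 := by omega
      rw [h, hl]; ring
    have hpow : l ^ n = l ^ (n-2) * (l * l) := by
      conv_lhs => rw [show n = n-2+1+1 from by omega]
      rw [pow_succ, pow_succ, mul_assoc]
    rw [hsum, hpow]
    field_simp
    ring
  · rcases Nat.lt_or_ge c.val (2*n-2) with hclt | hcge
    · -- n ≤ c ≤ 2n-3 : rows n-1 and c+1
      have hr2 : c.val + 1 < 2*n-1 := by omega
      rw [Finset.sum_eq_add_of_mem ⟨n-1, hrm⟩ ⟨c.val+1, hr2⟩ (Finset.mem_univ _)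
        (Finset.mem_univ _) (Fin.ne_of_val_ne (show n-1 ≠ c.val+1 by omega))
        (fun b _ hb => by
          have hb1 : b.val ≠ n - 1 := fun h => hb.1 (Fin.ext h)
          have hb2 : b.val ≠ c.val + 1 := fun h => hb.2 (Fin.ext h)
          rw [adjZ b c (by intro h; omega) (by intro h; omega) (by intro h; omega),
            mul_zero])]
      rw [adjB _ c rfl (show c.val ≠ n-1 by omega), mul_one, hmid ⟨n-1, hrm⟩ rfl,
        adjC _ c (show n-1 < c.val+1 by omega) (show c.val = c.val+1-1 by omega),
        mul_one,
        huval ⟨c.val+1, hr2⟩ (2*n-2-c.val-1) (show c.val+1 ≠ n-1 by omega)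
          (show min (c.val+1) (2*n-2-(c.val+1)) = 2*n-2-c.val-1 by omega),
        huval c (2*n-2-c.val-1+1) (by omega) (by omega),
        add_comm]
      exact key15 l hl0 (2*n-2-c.val-1)
    · -- c = 2n-2 : only the middle row
      rw [Finset.sum_eq_single_of_mem ⟨n-1, hrm⟩ (Finset.mem_univ _)
        (fun b _ hb => by
          have hbv : b.val ≠ n-1 := fun h => hb (Fin.ext h)
          rw [adjZ b c (by intro h; omega) (by intro h; omega) (by intro h; omega),
            mul_zero])]
      rw [adjB _ c rfl (show c.val ≠ n-1 by omega), mul_one, hmid ⟨n-1, hrm⟩ rfl,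
        huval c 0 (by omega) (by omega)]
      simp
end

section
/- Let n ≥ 3 and λ ∈ (1,2) satisfy λ^n = 2(1 + λ + ... + λ^{n-2}). Then (2/((λ−1)λ^n))·(λ^{n-1} − n + λ^n/2) < 2. -/
/-- Let `n ≥ 3` and `λ ∈ (1,2)` satisfy `λ^n = 2(1 + λ + ⋯ + λ^{n-2})`. Then
`(2/((λ-1)λ^n))·(λ^{n-1} - n + λ^n/2) < 2`. -/
theorem stmt16 (n : ℕ) (hn : 3 ≤ n) (l : ℝ) (hl1 : 1 < l) (hl2 : l < 2)
    (hl : l ^ n = 2 * ∑ i ∈ Finset.range (n - 1), l ^ i) :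
    2 / ((l - 1) * l ^ n) * (l ^ (n - 1) - n + l ^ n / 2) < 2 := by
  have h1 : (0:ℝ) < l - 1 := by linarith
  have hlpos : (0:ℝ) < l := by linarith
  have hpow : 0 < l ^ n := pow_pos hlpos n
  have hsum : ∑ i ∈ Finset.range (n - 1), l ^ i = (l ^ (n - 1) - 1) / (l - 1) :=
    geom_sum_eq (by linarith) _
  have hkey : (l - 1) * l ^ n = 2 * (l ^ (n - 1) - 1) := by
    rw [hl, hsum]; field_simp
  have hA : 0 < (l - 1) * l ^ n := mul_pos h1 hpow
  rw [div_mul_eq_mul_div, div_lt_iff₀ hA]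
  have hpow' : l ^ n = l * l ^ (n - 1) := by
    rw [← pow_succ']; congr 1; omega
  have hp1 : 0 < l ^ (n - 1) := pow_pos hlpos _
  have h2 : l ^ n < 2 * l ^ (n - 1) := by
    rw [hpow']; nlinarith
  have hn' : (3:ℝ) ≤ (n:ℝ) := by exact_mod_cast hn
  nlinarith [hkey]
end

section
/- Let n ≥ 3, β the largest positive root of x^n = x^{n-2} + ... + x + 1, a = 1/(β²−1), b = β/(β²−1), and define c_1 = a, c_i = β^{i-1}a − β^{i-2} + β^{-1} for 2 ≤ i ≤ n−1, c_n = b. Then a = c_1 < c_2 < ... < c_n = b, and the greedy map L_1 defined by L_1(x) = β^{n-i+1}x − β^{n-i} for x ∈ [c_i, c_{i+1}) maps each interval [c_i, c_{i+1}) onto [a, b) (i.e. L_1(c_i) = a and the limit at c_{i+1}^- is b). -/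
/-- Let `β` be the largest positive root of `x^n = x^{n-2} + ⋯ + x + 1` (`n ≥ 3`),
`a = 1/(β²-1)`, `b = β/(β²-1)`, and `c_1 = a`, `c_i = β^{i-1} a - β^{i-2} + β⁻¹` for
`2 ≤ i ≤ n-1`, `c_n = b`. Then `a = c_1 < c_2 < ⋯ < c_n = b`, and the greedy map
`L_1(x) = β^{n-i+1} x - β^{n-i}` maps each `[c_i, c_{i+1})` onto `[a, b)`:
`L_1(c_i) = a` and `β^{n-i+1} c_{i+1} - β^{n-i} = b`. -/
theorem stmt19 (n : ℕ) (hn : 3 ≤ n) (β : ℝ)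
    (hβ : 0 < β ∧ β ^ n = ∑ i ∈ Finset.range (n - 1), β ^ i ∧
      ∀ x : ℝ, 0 < x → x ^ n = ∑ i ∈ Finset.range (n - 1), x ^ i → x ≤ β)
    (a b : ℝ) (ha : a = (β ^ 2 - 1)⁻¹) (hb : b = β * (β ^ 2 - 1)⁻¹)
    (c : ℕ → ℝ) (hc1 : c 1 = a) (hcn : c n = b)
    (hc : ∀ i : ℕ, 2 ≤ i → i ≤ n - 1 → c i = β ^ (i - 1) * a - β ^ (i - 2) + β⁻¹) :
    (∀ i : ℕ, 1 ≤ i → i < n → c i < c (i + 1)) ∧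
    (∀ i : ℕ, 1 ≤ i → i ≤ n - 1 →
      β ^ (n - i + 1) * c i - β ^ (n - i) = a ∧
      β ^ (n - i + 1) * c (i + 1) - β ^ (n - i) = b) := by
  obtain ⟨hβ0, heq, -⟩ := hβ
  have hβne : β ≠ 0 := ne_of_gt hβ0
  have hβ1 : 1 < β := by
    by_contra h
    push_neg at h
    have h1 : β ^ n ≤ β ^ 1 := pow_le_pow_of_le_one hβ0.le h (by omega)
    have h2 : 1 + β ≤ ∑ i ∈ Finset.range (n - 1), β ^ i := by
      have hsub : Finset.range 2 ⊆ Finset.range (n - 1) := by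
        apply Finset.range_subset_range.mpr; omega
      calc 1 + β = ∑ i ∈ Finset.range 2, β ^ i := by
            norm_num [Finset.sum_range_succ]
        _ ≤ _ := Finset.sum_le_sum_of_subset_of_nonneg hsub
            (fun i _ _ => by positivity)
    rw [← heq] at h2
    rw [pow_one] at h1
    linarith
  have hd : (0:ℝ) < β ^ 2 - 1 := by nlinarith
  have hdne : β ^ 2 - 1 ≠ 0 := ne_of_gt hd
  have hgeo : (∑ i ∈ Finset.range (n-1), β ^ i) * (β - 1) = β ^ (n-1) - 1 :=
    geom_sum_mul β (n-1)
  rw [← heq] at hgeo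
  have hK : β ^ n * β = β ^ n + β ^ (n-1) - 1 := by linear_combination hgeo
  have hpq : β ^ (n-1) * β = β ^ n := by rw [← pow_succ]; congr 1; omega
  have hq' : β ^ n * β = β ^ (n+1) := by rw [← pow_succ]
  have ha' : a * (β ^ 2 - 1) = 1 := by rw [ha]; field_simp
  have hb' : b * (β ^ 2 - 1) = β := by rw [hb]; field_simp
  have hA : β ^ n * a - β ^ (n-1) = a := by
    have h2 : (β ^ n * a - β ^ (n-1)) * (β ^ 2 - 1) = a * (β ^ 2 - 1) := by
      linear_combination (β ^ n) * ha' - ha' - β * hpq - hK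
    exact mul_right_cancel₀ hdne h2
  have hB : β ^ (n+1) * a - β ^ n = b := by
    have h2 : (β ^ (n+1) * a - β ^ n) * (β ^ 2 - 1) = b * (β ^ 2 - 1) := by
      linear_combination (β ^ (n+1)) * ha' - hb' - β * hK - hpq - hq'
    exact mul_right_cancel₀ hdne h2
  have main : ∀ i : ℕ, 1 ≤ i → i ≤ n - 1 →
      β ^ (n - i + 1) * c i - β ^ (n - i) = a ∧
      β ^ (n - i + 1) * c (i + 1) - β ^ (n - i) = b := by
    intro i hi1 hin
    have e3 : β ^ (n - i + 1) * β⁻¹ = β ^ (n - i) := by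
      rw [pow_succ, mul_assoc, mul_inv_cancel₀ hβne, mul_one]
    constructor
    · rcases eq_or_lt_of_le hi1 with h1 | h2
      · rw [← h1, hc1, show n - 1 + 1 = n from by omega]
        exact hA
      · have hi2 : 2 ≤ i := h2
        rw [hc i hi2 hin]
        have e1 : β ^ (n - i + 1) * β ^ (i - 1) = β ^ n := by
          rw [← pow_add]; congr 1; omega
        have e2 : β ^ (n - i + 1) * β ^ (i - 2) = β ^ (n-1) := by
          rw [← pow_add]; congr 1; omega
        linear_combination a * e1 - e2 + e3 + hA
    · rcases le_or_gt (i + 1) (n - 1) with h1 | h2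
      · rw [hc (i+1) (by omega) h1]
        have e1 : β ^ (n - i + 1) * β ^ (i + 1 - 1) = β ^ (n+1) := by
          rw [← pow_add]; congr 1; omega
        have e2 : β ^ (n - i + 1) * β ^ (i + 1 - 2) = β ^ n := by
          rw [← pow_add]; congr 1; omega
        linear_combination a * e1 - e2 + e3 + hB
      · have hin' : i = n - 1 := by omega
        rw [show i + 1 = n from by omega, hcn,
          show n - i = 1 from by omega, hb]
        field_simp
        ring
  refine ⟨?_, main⟩
  intro i hi1 hin
  obtain ⟨hAi, hBi⟩ := main i hi1 (by omega)
  have hpow : 0 < β ^ (n - i + 1) := pow_pos hβ0 _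
  have hba : a < b := by
    have hia : 0 < (β ^ 2 - 1)⁻¹ := inv_pos.mpr hd
    rw [ha, hb]; nlinarith
  nlinarith [hAi, hBi, hpow, hba]
end
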